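/- Let L, T > 0, let m ≥ 1 and n be real numbers, let S̄ : [0,L] → ℝ be continuous, and let (h,s) be a classical solution of the tear-film system with exponents (m,n) on [0,L]×[0,T]. Suppose λ > 0 satisfies λ ≤ S̄(x) for all x ∈ [0,L], and that the initial datum satisfies λ ≤ s(x,0) ≤ sup_{[0,L]} S̄ for all x ∈ [0,L]. Then the weak maximum principle holds for the osmolarity: λ ≤ s(x,t) ≤ sup_{[0,L]} S̄ for all (x,t) ∈ [0,L]×[0,T]. -/

import Mathlib

open Set MeasureTheory intervalIntegral Filter

open Set MeasureTheory

/-- A classical solution of the tear-film system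
`h_t = −(hⁿ h_{xxx})_x − hᵐ(S̄ − s)`,
`s_t = s_{xx} + (h_x/h − h^{n−1} h_{xxx}) s_x + s(S̄ − s) h^{m−1}`
on `[0,L] × [0,T]`, with `h > 0`, `h` four times and `s` twice continuously
differentiable in `x`, both continuously differentiable in `t` (all partial
derivatives jointly continuous), subject to the boundary conditions
`h_x = h_{xxx} = s_x = 0` at `x = 0` and `x = L`. -/
structure TearFilmSolution (L T m n : ℝ) (Sbar : ℝ → ℝ) where
  h : ℝ → ℝ → ℝ
  s : ℝ → ℝ → ℝ
  hx : ℝ → ℝ → ℝ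
  hxx : ℝ → ℝ → ℝ
  hxxx : ℝ → ℝ → ℝ
  hxxxx : ℝ → ℝ → ℝ
  ht : ℝ → ℝ → ℝ
  sx : ℝ → ℝ → ℝ
  sxx : ℝ → ℝ → ℝ
  st : ℝ → ℝ → ℝ
  h_pos : ∀ x ∈ Icc 0 L, ∀ t ∈ Icc 0 T, 0 < h x t
  hasDeriv_hx : ∀ t ∈ Icc 0 T, ∀ x ∈ Icc 0 L,
    HasDerivWithinAt (fun x' => h x' t) (hx x t) (Icc 0 L) x
  hasDeriv_hxx : ∀ t ∈ Icc 0 T, ∀ x ∈ Icc 0 L,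
    HasDerivWithinAt (fun x' => hx x' t) (hxx x t) (Icc 0 L) x
  hasDeriv_hxxx : ∀ t ∈ Icc 0 T, ∀ x ∈ Icc 0 L,
    HasDerivWithinAt (fun x' => hxx x' t) (hxxx x t) (Icc 0 L) x
  hasDeriv_hxxxx : ∀ t ∈ Icc 0 T, ∀ x ∈ Icc 0 L,
    HasDerivWithinAt (fun x' => hxxx x' t) (hxxxx x t) (Icc 0 L) x
  hasDeriv_ht : ∀ x ∈ Icc 0 L, ∀ t ∈ Icc 0 T,
    HasDerivWithinAt (fun t' => h x t') (ht x t) (Icc 0 T) t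
  hasDeriv_sx : ∀ t ∈ Icc 0 T, ∀ x ∈ Icc 0 L,
    HasDerivWithinAt (fun x' => s x' t) (sx x t) (Icc 0 L) x
  hasDeriv_sxx : ∀ t ∈ Icc 0 T, ∀ x ∈ Icc 0 L,
    HasDerivWithinAt (fun x' => sx x' t) (sxx x t) (Icc 0 L) x
  hasDeriv_st : ∀ x ∈ Icc 0 L, ∀ t ∈ Icc 0 T,
    HasDerivWithinAt (fun t' => s x t') (st x t) (Icc 0 T) t
  cont_h : ContinuousOn (fun p : ℝ × ℝ => h p.1 p.2) (Icc 0 L ×ˢ Icc 0 T)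
  cont_s : ContinuousOn (fun p : ℝ × ℝ => s p.1 p.2) (Icc 0 L ×ˢ Icc 0 T)
  cont_hx : ContinuousOn (fun p : ℝ × ℝ => hx p.1 p.2) (Icc 0 L ×ˢ Icc 0 T)
  cont_hxx : ContinuousOn (fun p : ℝ × ℝ => hxx p.1 p.2) (Icc 0 L ×ˢ Icc 0 T)
  cont_hxxx : ContinuousOn (fun p : ℝ × ℝ => hxxx p.1 p.2) (Icc 0 L ×ˢ Icc 0 T)
  cont_hxxxx : ContinuousOn (fun p : ℝ × ℝ => hxxxx p.1 p.2) (Icc 0 L ×ˢ Icc 0 T)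
  cont_ht : ContinuousOn (fun p : ℝ × ℝ => ht p.1 p.2) (Icc 0 L ×ˢ Icc 0 T)
  cont_sx : ContinuousOn (fun p : ℝ × ℝ => sx p.1 p.2) (Icc 0 L ×ˢ Icc 0 T)
  cont_sxx : ContinuousOn (fun p : ℝ × ℝ => sxx p.1 p.2) (Icc 0 L ×ˢ Icc 0 T)
  cont_st : ContinuousOn (fun p : ℝ × ℝ => st p.1 p.2) (Icc 0 L ×ˢ Icc 0 T)
  pde_h : ∀ x ∈ Icc 0 L, ∀ t ∈ Icc 0 T,
    ht x t = -(n * h x t ^ (n - 1) * hx x t * hxxx x t + h x t ^ n * hxxxx x t)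
      - h x t ^ m * (Sbar x - s x t)
  pde_s : ∀ x ∈ Icc 0 L, ∀ t ∈ Icc 0 T,
    st x t = sxx x t + (hx x t / h x t - h x t ^ (n - 1) * hxxx x t) * sx x t
      + s x t * (Sbar x - s x t) * h x t ^ (m - 1)
  bc : ∀ t ∈ Icc 0 T,
    hx 0 t = 0 ∧ hx L t = 0 ∧ hxxx 0 t = 0 ∧ hxxx L t = 0 ∧ sx 0 t = 0 ∧ sx L t = 0


section Helpers
open Topology

lemma div_nonneg_of_nonpos_of_nonpos' {a b : ℝ} (ha : a ≤ 0) (hb : b ≤ 0) : 0 ≤ a / b := by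
  rcases eq_or_lt_of_le hb with rfl | hb
  · simp
  · rw [div_nonneg_iff]; right; exact ⟨ha, le_of_lt hb⟩

/-- One-sided derivative sign at a right-endpoint maximum. -/
lemma deriv_nonneg_of_max_right {g : ℝ → ℝ} {d t₀ : ℝ} (ht₀ : 0 < t₀)
    (hd : HasDerivWithinAt g d (Icc 0 t₀) t₀)
    (hmax : ∀ t ∈ Icc 0 t₀, g t ≤ g t₀) : 0 ≤ d := by
  have htend := hasDerivWithinAt_iff_tendsto_slope.mp hd
  have hset : Icc (0:ℝ) t₀ \ {t₀} = Ico 0 t₀ := Icc_sdiff_right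
  rw [hset] at htend
  have : NeBot (𝓝[Ico (0:ℝ) t₀] t₀) := right_nhdsWithin_Ico_neBot ht₀
  refine ge_of_tendsto htend ?_
  filter_upwards [self_mem_nhdsWithin] with t ht
  have h1 : g t - g t₀ ≤ 0 := sub_nonpos.mpr (hmax t ⟨ht.1, le_of_lt ht.2⟩)
  have h2 : t - t₀ < 0 := sub_neg.mpr ht.2
  rw [slope_def_field]
  exact div_nonneg_of_nonpos_of_nonpos' h1 (le_of_lt h2)

/-- Interior maximum: first derivative vanishes. -/
lemma deriv_zero_at_interior_max {L : ℝ} {f : ℝ → ℝ} {d x₀ : ℝ} (h0 : 0 < x₀) (hL : x₀ < L)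
    (hd : HasDerivWithinAt f d (Icc 0 L) x₀)
    (hmax : ∀ x ∈ Icc 0 L, f x ≤ f x₀) : d = 0 := by
  have hmem : Icc (0:ℝ) L ∈ 𝓝 x₀ := Icc_mem_nhds h0 hL
  have hd' : HasDerivAt f d x₀ := hd.hasDerivAt hmem
  have hloc : IsLocalMax f x₀ := Filter.eventually_of_mem hmem hmax
  exact hloc.hasDerivAt_eq_zero hd'

/-- Second derivative test at a maximum on [0,L] where the first derivative vanishes. -/
lemma second_deriv_nonpos_at_max {L : ℝ} (hL : 0 < L) {f f' : ℝ → ℝ} {d x₀ : ℝ}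
    (hx₀ : x₀ ∈ Icc 0 L)
    (hd1 : ∀ x ∈ Icc 0 L, HasDerivWithinAt f (f' x) (Icc 0 L) x)
    (hd2 : HasDerivWithinAt f' d (Icc 0 L) x₀)
    (hf'0 : f' x₀ = 0)
    (hmax : ∀ x ∈ Icc 0 L, f x ≤ f x₀) : d ≤ 0 := by
  by_contra hcon
  push_neg at hcon
  have htend := hasDerivWithinAt_iff_tendsto_slope.mp hd2
  have hev : ∀ᶠ x in 𝓝[Icc 0 L \ {x₀}] x₀, 0 < slope f' x₀ x :=
    htend.eventually (eventually_gt_nhds hcon)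
  rw [eventually_nhdsWithin_iff] at hev
  rw [Metric.eventually_nhds_iff] at hev
  obtain ⟨δ, hδ, hball⟩ := hev
  have hcontf : ContinuousOn f (Icc 0 L) := fun x hx => (hd1 x hx).continuousWithinAt
  rcases lt_or_eq_of_le hx₀.2 with hx₀L | hx₀L
  · set c := min (x₀ + δ / 2) L with hc
    have hcx : x₀ < c := lt_min (by linarith) hx₀L
    have hcL : c ≤ L := min_le_right _ _
    have hfpos : ∀ x ∈ Ioo x₀ c, 0 < f' x := by
      intro x hx
      have hxIcc : x ∈ Icc 0 L := ⟨le_of_lt (lt_of_le_of_lt hx₀.1 hx.1), le_of_lt (lt_of_lt_of_le hx.2 hcL)⟩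
      have hdist : dist x x₀ < δ := by
        rw [Real.dist_eq, abs_of_pos (by linarith [hx.1])]
        have : x < x₀ + δ / 2 := lt_of_lt_of_le hx.2 (min_le_left _ _)
        linarith
      have hslope := hball hdist ⟨hxIcc, by simp [ne_of_gt hx.1]⟩
      rw [slope_def_field, hf'0, sub_zero] at hslope
      have hxx : 0 < x - x₀ := by linarith [hx.1]
      exact (div_pos_iff.mp hslope).resolve_right (fun h => absurd hxx (not_lt.mpr (le_of_lt h.2))) |>.1
    have hmono : StrictMonoOn f (Icc x₀ c) := by
      apply strictMonoOn_of_deriv_pos (convex_Icc _ _)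
      · exact hcontf.mono (Icc_subset_Icc hx₀.1 hcL)
      · intro x hx
        rw [interior_Icc] at hx
        have hx0 : 0 < x := lt_of_le_of_lt hx₀.1 hx.1
        have hxL : x < L := lt_of_lt_of_le hx.2 hcL
        have hxIcc : x ∈ Icc 0 L := ⟨le_of_lt hx0, le_of_lt hxL⟩
        have := (hd1 x hxIcc).hasDerivAt (Icc_mem_nhds hx0 hxL)
        rw [this.deriv]
        exact hfpos x hx
    have h1 : f x₀ < f c := hmono ⟨le_refl _, le_of_lt hcx⟩ ⟨le_of_lt hcx, le_refl _⟩ hcx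
    have h2 : f c ≤ f x₀ := hmax c ⟨le_trans hx₀.1 (le_of_lt hcx), hcL⟩
    linarith
  · have hx₀pos : 0 < x₀ := hx₀L ▸ hL
    set c := max (x₀ - δ / 2) 0 with hc
    have hcx : c < x₀ := max_lt (by linarith) hx₀pos
    have hc0 : 0 ≤ c := le_max_right _ _
    have hfneg : ∀ x ∈ Ioo c x₀, f' x < 0 := by
      intro x hx
      have hxIcc : x ∈ Icc 0 L := ⟨le_trans hc0 (le_of_lt hx.1), le_of_lt (lt_of_lt_of_le hx.2 hx₀.2)⟩
      have hdist : dist x x₀ < δ := by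
        rw [Real.dist_eq, abs_of_neg (by linarith [hx.2])]
        have : x₀ - δ / 2 ≤ c := le_max_left _ _
        linarith [hx.1]
      have hslope := hball hdist ⟨hxIcc, by simp [ne_of_lt hx.2]⟩
      rw [slope_def_field, hf'0, sub_zero] at hslope
      have hxx : x - x₀ < 0 := by linarith [hx.2]
      rcases div_pos_iff.mp hslope with h | h
      · linarith [h.2]
      · linarith [h.1]
    have hanti : StrictAntiOn f (Icc c x₀) := by
      apply strictAntiOn_of_deriv_neg (convex_Icc _ _)
      · exact hcontf.mono (Icc_subset_Icc hc0 hx₀.2)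
      · intro x hx
        rw [interior_Icc] at hx
        have hx0 : 0 < x := lt_of_le_of_lt hc0 hx.1
        have hxL : x < L := hx₀L ▸ hx.2
        have hxIcc : x ∈ Icc 0 L := ⟨le_of_lt hx0, le_of_lt hxL⟩
        have := (hd1 x hxIcc).hasDerivAt (Icc_mem_nhds hx0 hxL)
        rw [this.deriv]
        exact hfneg x hx
    have h1 : f x₀ < f c := hanti ⟨le_refl _, le_of_lt hcx⟩ ⟨le_of_lt hcx, le_refl _⟩ hcx
    have h2 : f c ≤ f x₀ := hmax c ⟨hc0, le_trans (le_of_lt hcx) hx₀.2⟩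
    linarith

end Helpers
section Core

/-- Lower bound core argument: on a time interval where `s` stays positive,
`s ≥ lam` is preserved. -/
lemma tearfilm_lower_core (L T m n : ℝ) (hL : 0 < L)
    (Sbar : ℝ → ℝ) (sol : TearFilmSolution L T m n Sbar)
    (lam : ℝ) (hlam : 0 < lam) (hlamS : ∀ x ∈ Icc (0:ℝ) L, lam ≤ Sbar x)
    (hs0 : ∀ x ∈ Icc (0:ℝ) L, lam ≤ sol.s x 0)
    (τ : ℝ) (hτ0 : 0 < τ) (hτT : τ ≤ T)
    (hpos : ∀ x ∈ Icc (0:ℝ) L, ∀ t ∈ Icc (0:ℝ) τ, 0 < sol.s x t) :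
    ∀ x ∈ Icc (0:ℝ) L, ∀ t ∈ Icc (0:ℝ) τ, lam ≤ sol.s x t := by
  have key : ∀ ε : ℝ, 0 < ε → ∀ x ∈ Icc (0:ℝ) L, ∀ t ∈ Icc (0:ℝ) τ,
      lam - sol.s x t - ε * t ≤ 0 := by
    intro ε hε
    by_contra hcon
    push_neg at hcon
    obtain ⟨x₁, hx₁, t₁, ht₁, hgt⟩ := hcon
    have hrc : IsCompact (Icc (0:ℝ) L ×ˢ Icc (0:ℝ) τ) := isCompact_Icc.prod isCompact_Icc
    have hsub : Icc (0:ℝ) L ×ˢ Icc (0:ℝ) τ ⊆ Icc (0:ℝ) L ×ˢ Icc (0:ℝ) T :=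
      prod_mono_right (Icc_subset_Icc_right hτT)
    have hcu : ContinuousOn (fun p : ℝ × ℝ => lam - sol.s p.1 p.2 - ε * p.2)
        (Icc (0:ℝ) L ×ˢ Icc (0:ℝ) τ) := by
      apply ContinuousOn.sub
      · exact ContinuousOn.sub continuousOn_const (sol.cont_s.mono hsub)
      · exact (continuous_const.mul continuous_snd).continuousOn
    obtain ⟨⟨x₀, t₀⟩, hp₀, hmax⟩ :=
      hrc.exists_isMaxOn ⟨(x₁, t₁), mem_prod.mpr ⟨hx₁, ht₁⟩⟩ hcu
    have hmax' : ∀ p ∈ Icc (0:ℝ) L ×ˢ Icc (0:ℝ) τ,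
        lam - sol.s p.1 p.2 - ε * p.2 ≤ lam - sol.s x₀ t₀ - ε * t₀ :=
      fun p hp => isMaxOn_iff.mp hmax p hp
    have hx₀ : x₀ ∈ Icc (0:ℝ) L := (mem_prod.mp hp₀).1
    have ht₀ : t₀ ∈ Icc (0:ℝ) τ := (mem_prod.mp hp₀).2
    have ht₀T : t₀ ∈ Icc (0:ℝ) T := ⟨ht₀.1, le_trans ht₀.2 hτT⟩
    have humax : 0 < lam - sol.s x₀ t₀ - ε * t₀ :=
      lt_of_lt_of_le hgt (hmax' (x₁, t₁) (mem_prod.mpr ⟨hx₁, ht₁⟩))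
    have ht₀pos : 0 < t₀ := by
      rcases eq_or_lt_of_le ht₀.1 with h | h
      · exfalso
        have h1 := hs0 x₀ hx₀
        rw [← h] at humax
        simp at humax
        linarith
      · exact h
    -- time derivative at the maximum
    have hst : sol.st x₀ t₀ ≤ -ε := by
      have hgd : HasDerivWithinAt (fun t => lam - sol.s x₀ t - ε * t)
          (0 - sol.st x₀ t₀ - ε * 1) (Icc 0 t₀) t₀ := by
        have h1 := ((sol.hasDeriv_st x₀ hx₀ t₀ ht₀T).mono
          (Icc_subset_Icc_right ht₀T.2))
        have h2 : HasDerivWithinAt (fun t : ℝ => ε * t) (ε * 1) (Icc 0 t₀) t₀ :=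
          ((hasDerivAt_id t₀).const_mul ε).hasDerivWithinAt
        exact (((hasDerivWithinAt_const t₀ (Icc 0 t₀) lam).sub h1).sub h2)
      have hmaxt : ∀ t ∈ Icc (0:ℝ) t₀,
          lam - sol.s x₀ t - ε * t ≤ lam - sol.s x₀ t₀ - ε * t₀ := by
        intro t ht
        exact hmax' (x₀, t) (mem_prod.mpr ⟨hx₀, ⟨ht.1, le_trans ht.2 ht₀.2⟩⟩)
      have := deriv_nonneg_of_max_right ht₀pos hgd hmaxt
      linarith
    -- space maximum
    have hmaxx : ∀ x ∈ Icc (0:ℝ) L, -sol.s x t₀ ≤ -sol.s x₀ t₀ := by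
      intro x hx
      have := hmax' (x, t₀) (mem_prod.mpr ⟨hx, ht₀⟩)
      simp only at this
      linarith
    have hsx0 : sol.sx x₀ t₀ = 0 := by
      rcases eq_or_lt_of_le hx₀.1 with h0 | h0
      · rw [← h0]; exact (sol.bc t₀ ht₀T).2.2.2.2.1
      · rcases eq_or_lt_of_le hx₀.2 with hL' | hL'
        · rw [hL']; exact (sol.bc t₀ ht₀T).2.2.2.2.2
        · have hd := (sol.hasDeriv_sx t₀ ht₀T x₀ hx₀).neg
          have := deriv_zero_at_interior_max h0 hL' hd hmaxx
          linarith
    have hsxx : 0 ≤ sol.sxx x₀ t₀ := by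
      have hd1 : ∀ x ∈ Icc (0:ℝ) L,
          HasDerivWithinAt (fun x' => -sol.s x' t₀) (-sol.sx x t₀) (Icc 0 L) x :=
        fun x hx => (sol.hasDeriv_sx t₀ ht₀T x hx).neg
      have hd2 : HasDerivWithinAt (fun x' => -sol.sx x' t₀) (-sol.sxx x₀ t₀) (Icc 0 L) x₀ :=
        (sol.hasDeriv_sxx t₀ ht₀T x₀ hx₀).neg
      have := second_deriv_nonpos_at_max (f := fun x' => -sol.s x' t₀)
        (f' := fun x' => -sol.sx x' t₀) hL hx₀ hd1 hd2 (by simp [hsx0]) hmaxx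
      simp at this
      linarith
    -- PDE contradiction
    have hpde := sol.pde_s x₀ hx₀ t₀ ht₀T
    rw [hsx0, mul_zero, add_zero] at hpde
    have hs_pos : 0 < sol.s x₀ t₀ := hpos x₀ hx₀ t₀ ht₀
    have hSs : 0 < Sbar x₀ - sol.s x₀ t₀ := by
      have h1 := hlamS x₀ hx₀
      nlinarith [mul_pos hε ht₀pos]
    have hpow : 0 < sol.h x₀ t₀ ^ (m - 1) :=
      Real.rpow_pos_of_pos (sol.h_pos x₀ hx₀ t₀ ht₀T) _
    have hreac : 0 < sol.s x₀ t₀ * (Sbar x₀ - sol.s x₀ t₀) * sol.h x₀ t₀ ^ (m - 1) :=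
      mul_pos (mul_pos hs_pos hSs) hpow
    linarith
  intro x hx t ht
  by_contra hcon
  push_neg at hcon
  have hd : 0 < (lam - sol.s x t) / (2 * τ) := div_pos (by linarith) (by linarith)
  have hkey := key _ hd x hx t ht
  have h1 : (lam - sol.s x t) / (2 * τ) * t ≤ (lam - sol.s x t) / (2 * τ) * τ :=
    mul_le_mul_of_nonneg_left ht.2 (le_of_lt hd)
  have h2 : (lam - sol.s x t) / (2 * τ) * τ = (lam - sol.s x t) / 2 := by
    field_simp
  linarith

/-- Upper bound via maximum principle. -/
lemma tearfilm_upper (L T m n : ℝ) (hL : 0 < L)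
    (Sbar : ℝ → ℝ) (sol : TearFilmSolution L T m n Sbar)
    (M : ℝ) (hMpos : 0 < M) (hSleM : ∀ x ∈ Icc (0:ℝ) L, Sbar x ≤ M)
    (hs0 : ∀ x ∈ Icc (0:ℝ) L, sol.s x 0 ≤ M) (hT : 0 < T) :
    ∀ x ∈ Icc (0:ℝ) L, ∀ t ∈ Icc (0:ℝ) T, sol.s x t ≤ M := by
  have key : ∀ ε : ℝ, 0 < ε → ∀ x ∈ Icc (0:ℝ) L, ∀ t ∈ Icc (0:ℝ) T,
      sol.s x t - M - ε * t ≤ 0 := by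
    intro ε hε
    by_contra hcon
    push_neg at hcon
    obtain ⟨x₁, hx₁, t₁, ht₁, hgt⟩ := hcon
    have hrc : IsCompact (Icc (0:ℝ) L ×ˢ Icc (0:ℝ) T) := isCompact_Icc.prod isCompact_Icc
    have hcu : ContinuousOn (fun p : ℝ × ℝ => sol.s p.1 p.2 - M - ε * p.2)
        (Icc (0:ℝ) L ×ˢ Icc (0:ℝ) T) := by
      apply ContinuousOn.sub
      · exact ContinuousOn.sub sol.cont_s continuousOn_const
      · exact (continuous_const.mul continuous_snd).continuousOn
    obtain ⟨⟨x₀, t₀⟩, hp₀, hmax⟩ :=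
      hrc.exists_isMaxOn ⟨(x₁, t₁), mem_prod.mpr ⟨hx₁, ht₁⟩⟩ hcu
    have hmax' : ∀ p ∈ Icc (0:ℝ) L ×ˢ Icc (0:ℝ) T,
        sol.s p.1 p.2 - M - ε * p.2 ≤ sol.s x₀ t₀ - M - ε * t₀ :=
      fun p hp => isMaxOn_iff.mp hmax p hp
    have hx₀ : x₀ ∈ Icc (0:ℝ) L := (mem_prod.mp hp₀).1
    have ht₀T : t₀ ∈ Icc (0:ℝ) T := (mem_prod.mp hp₀).2
    have humax : 0 < sol.s x₀ t₀ - M - ε * t₀ :=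
      lt_of_lt_of_le hgt (hmax' (x₁, t₁) (mem_prod.mpr ⟨hx₁, ht₁⟩))
    have ht₀pos : 0 < t₀ := by
      rcases eq_or_lt_of_le ht₀T.1 with h | h
      · exfalso
        have h1 := hs0 x₀ hx₀
        rw [← h] at humax
        simp at humax
        linarith
      · exact h
    have hst : ε ≤ sol.st x₀ t₀ := by
      have hgd : HasDerivWithinAt (fun t => sol.s x₀ t - M - ε * t)
          (sol.st x₀ t₀ - 0 - ε * 1) (Icc 0 t₀) t₀ := by
        have h1 := ((sol.hasDeriv_st x₀ hx₀ t₀ ht₀T).mono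
          (Icc_subset_Icc_right ht₀T.2))
        have h2 : HasDerivWithinAt (fun t : ℝ => ε * t) (ε * 1) (Icc 0 t₀) t₀ :=
          ((hasDerivAt_id t₀).const_mul ε).hasDerivWithinAt
        exact ((h1.sub (hasDerivWithinAt_const t₀ (Icc 0 t₀) M)).sub h2)
      have hmaxt : ∀ t ∈ Icc (0:ℝ) t₀,
          sol.s x₀ t - M - ε * t ≤ sol.s x₀ t₀ - M - ε * t₀ := by
        intro t ht
        exact hmax' (x₀, t) (mem_prod.mpr ⟨hx₀, ⟨ht.1, le_trans ht.2 ht₀T.2⟩⟩)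
      have := deriv_nonneg_of_max_right ht₀pos hgd hmaxt
      linarith
    have hmaxx : ∀ x ∈ Icc (0:ℝ) L, sol.s x t₀ ≤ sol.s x₀ t₀ := by
      intro x hx
      have := hmax' (x, t₀) (mem_prod.mpr ⟨hx, ht₀T⟩)
      simp only at this
      linarith
    have hsx0 : sol.sx x₀ t₀ = 0 := by
      rcases eq_or_lt_of_le hx₀.1 with h0 | h0
      · rw [← h0]; exact (sol.bc t₀ ht₀T).2.2.2.2.1
      · rcases eq_or_lt_of_le hx₀.2 with hL' | hL'
        · rw [hL']; exact (sol.bc t₀ ht₀T).2.2.2.2.2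
        · exact deriv_zero_at_interior_max h0 hL'
            (sol.hasDeriv_sx t₀ ht₀T x₀ hx₀) hmaxx
    have hsxx : sol.sxx x₀ t₀ ≤ 0 := by
      have hd1 : ∀ x ∈ Icc (0:ℝ) L,
          HasDerivWithinAt (fun x' => sol.s x' t₀) (sol.sx x t₀) (Icc 0 L) x :=
        fun x hx => sol.hasDeriv_sx t₀ ht₀T x hx
      exact second_deriv_nonpos_at_max (f := fun x' => sol.s x' t₀)
        (f' := fun x' => sol.sx x' t₀) hL hx₀ hd1
        (sol.hasDeriv_sxx t₀ ht₀T x₀ hx₀) hsx0 hmaxx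
    have hpde := sol.pde_s x₀ hx₀ t₀ ht₀T
    rw [hsx0, mul_zero, add_zero] at hpde
    have hs_pos : 0 < sol.s x₀ t₀ := by nlinarith [mul_pos hε ht₀pos]
    have hSs : Sbar x₀ - sol.s x₀ t₀ < 0 := by
      have h1 := hSleM x₀ hx₀
      nlinarith [mul_pos hε ht₀pos]
    have hpow : 0 < sol.h x₀ t₀ ^ (m - 1) :=
      Real.rpow_pos_of_pos (sol.h_pos x₀ hx₀ t₀ ht₀T) _
    have hreac : sol.s x₀ t₀ * (Sbar x₀ - sol.s x₀ t₀) * sol.h x₀ t₀ ^ (m - 1) < 0 :=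
      mul_neg_of_neg_of_pos (mul_neg_of_pos_of_neg hs_pos hSs) hpow
    linarith
  intro x hx t ht
  by_contra hcon
  push_neg at hcon
  have hd : 0 < (sol.s x t - M) / (2 * T) := div_pos (by linarith) (by linarith)
  have hkey := key _ hd x hx t ht
  have h1 : (sol.s x t - M) / (2 * T) * t ≤ (sol.s x t - M) / (2 * T) * T :=
    mul_le_mul_of_nonneg_left ht.2 (le_of_lt hd)
  have h2 : (sol.s x t - M) / (2 * T) * T = (sol.s x t - M) / 2 := by
    field_simp
  linarith

end Core


/-- Weak maximum principle for the osmolarity: `λ ≤ s ≤ sup S̄`. -/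
theorem osmolarity_maximum_principle
    (L T m n : ℝ) (hL : 0 < L) (hT : 0 < T) (hm : 1 ≤ m)
    (Sbar : ℝ → ℝ) (hScont : ContinuousOn Sbar (Icc (0:ℝ) L))
    (sol : TearFilmSolution L T m n Sbar)
    (lam : ℝ) (hlam : 0 < lam)
    (hlamS : ∀ x ∈ Icc (0:ℝ) L, lam ≤ Sbar x)
    (hs0 : ∀ x ∈ Icc (0:ℝ) L,
      lam ≤ sol.s x 0 ∧ sol.s x 0 ≤ sSup (Sbar '' Icc (0:ℝ) L)) :
    ∀ x ∈ Icc (0:ℝ) L, ∀ t ∈ Icc (0:ℝ) T,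
      lam ≤ sol.s x t ∧ sol.s x t ≤ sSup (Sbar '' Icc (0:ℝ) L) := by
  have h0mem : (0:ℝ) ∈ Icc (0:ℝ) L := ⟨le_refl _, le_of_lt hL⟩
  have himg : IsCompact (Sbar '' Icc (0:ℝ) L) :=
    (isCompact_Icc).image_of_continuousOn hScont
  have hbdd : BddAbove (Sbar '' Icc (0:ℝ) L) := himg.bddAbove
  have hSleM : ∀ x ∈ Icc (0:ℝ) L, Sbar x ≤ sSup (Sbar '' Icc (0:ℝ) L) :=
    fun x hx => le_csSup hbdd (mem_image_of_mem _ hx)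
  have hlamM : lam ≤ sSup (Sbar '' Icc (0:ℝ) L) :=
    le_trans (hlamS 0 h0mem) (hSleM 0 h0mem)
  have upper : ∀ x ∈ Icc (0:ℝ) L, ∀ t ∈ Icc (0:ℝ) T,
      sol.s x t ≤ sSup (Sbar '' Icc (0:ℝ) L) :=
    tearfilm_upper L T m n hL Sbar sol _ (lt_of_lt_of_le hlam hlamM) hSleM
      (fun x hx => (hs0 x hx).2) hT
  have lower : ∀ x ∈ Icc (0:ℝ) L, ∀ t ∈ Icc (0:ℝ) T, lam ≤ sol.s x t := by
    by_cases hAne : {p : ℝ × ℝ | p ∈ Icc (0:ℝ) L ×ˢ Icc (0:ℝ) T ∧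
        sol.s p.1 p.2 ≤ lam / 2}.Nonempty
    · exfalso
      set A := {p : ℝ × ℝ | p ∈ Icc (0:ℝ) L ×ˢ Icc (0:ℝ) T ∧
        sol.s p.1 p.2 ≤ lam / 2} with hAdef
      have hAeq : A = (Icc (0:ℝ) L ×ˢ Icc (0:ℝ) T) ∩
          ((fun p : ℝ × ℝ => sol.s p.1 p.2) ⁻¹' Iic (lam / 2)) := by
        ext p
        simp [hAdef, Set.mem_inter_iff, Set.mem_preimage, Set.mem_Iic, and_comm]
      have hAclosed : IsClosed A := by
        rw [hAeq]
        exact sol.cont_s.preimage_isClosed_of_isClosed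
          (isClosed_Icc.prod isClosed_Icc) isClosed_Iic
      have hrectc : IsCompact (Icc (0:ℝ) L ×ˢ Icc (0:ℝ) T) :=
        isCompact_Icc.prod isCompact_Icc
      have hAcomp : IsCompact A :=
        hrectc.of_isClosed_subset hAclosed (fun p hp => hp.1)
      have hsnd : IsCompact (Prod.snd '' A) := hAcomp.image continuous_snd
      have hsndne : (Prod.snd '' A).Nonempty := hAne.image _
      obtain ⟨pb, hpbA, hpb2⟩ := hsnd.sInf_mem hsndne
      have hlb : ∀ p ∈ A, pb.2 ≤ p.2 := by
        intro p hp
        rw [hpb2]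
        exact csInf_le hsnd.bddBelow (mem_image_of_mem _ hp)
      have hxb : pb.1 ∈ Icc (0:ℝ) L := (mem_prod.mp hpbA.1).1
      have htb : pb.2 ∈ Icc (0:ℝ) T := (mem_prod.mp hpbA.1).2
      have htspos : 0 < pb.2 := by
        rcases eq_or_lt_of_le htb.1 with h | h
        · exfalso
          have h1 := (hs0 pb.1 hxb).1
          have h2 : sol.s pb.1 pb.2 ≤ lam / 2 := hpbA.2
          rw [← h] at h2
          linarith
        · exact h
      have hbefore : ∀ x ∈ Icc (0:ℝ) L, ∀ t, 0 ≤ t → t < pb.2 → lam / 2 < sol.s x t := by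
        intro x hx t ht0 htlt
        by_contra hc
        push_neg at hc
        have hmemA : (x, t) ∈ A :=
          ⟨mem_prod.mpr ⟨hx, ⟨ht0, le_trans (le_of_lt htlt) htb.2⟩⟩, hc⟩
        exact absurd (hlb (x, t) hmemA) (not_le.mpr htlt)
      have hposc : ∀ x ∈ Icc (0:ℝ) L, ∀ t ∈ Icc (0:ℝ) pb.2, 0 < sol.s x t := by
        intro x hx t ht
        rcases lt_or_eq_of_le ht.2 with h | h
        · exact lt_trans (by linarith) (hbefore x hx t ht.1 h)
        · have hcw : ContinuousWithinAt (fun t' => sol.s x t') (Icc 0 T) pb.2 :=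
            (sol.hasDeriv_st x hx pb.2 htb).continuousWithinAt
          have hge : lam / 2 ≤ sol.s x pb.2 := by
            have hmono : nhdsWithin pb.2 (Ico (0:ℝ) pb.2) ≤ nhdsWithin pb.2 (Icc (0:ℝ) T) :=
              nhdsWithin_mono _ (fun y hy => ⟨hy.1, le_trans (le_of_lt hy.2) htb.2⟩)
            have : (nhdsWithin pb.2 (Ico (0:ℝ) pb.2)).NeBot :=
              right_nhdsWithin_Ico_neBot htspos
            refine ge_of_tendsto (hcw.tendsto.mono_left hmono) ?_
            filter_upwards [self_mem_nhdsWithin] with y hy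
            exact le_of_lt (hbefore x hx y hy.1 hy.2)
          rw [h]
          linarith
      have hlow := tearfilm_lower_core L T m n hL Sbar sol lam hlam hlamS
        (fun x hx => (hs0 x hx).1) pb.2 htspos htb.2 hposc
      have h1 := hlow pb.1 hxb pb.2 ⟨le_of_lt htspos, le_refl _⟩
      have h2 : sol.s pb.1 pb.2 ≤ lam / 2 := hpbA.2
      linarith
    · apply tearfilm_lower_core L T m n hL Sbar sol lam hlam hlamS
        (fun x hx => (hs0 x hx).1) T hT le_rfl
      intro x hx t ht
      by_contra hc
      push_neg at hc
      exact hAne ⟨(x, t), ⟨mem_prod.mpr ⟨hx, ht⟩, by linarith⟩⟩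
  exact fun x hx t ht => ⟨lower x hx t ht, upper x hx t ht⟩
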